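/- arXiv:1611.00718 — 2 statements merged into one kernel-verified Lean document; each statement's English description precedes it below -/
import Mathlib

section
/- The homomorphism density into a graphon extends the homomorphism density into a graph: for all finite simple graphs H and G (with G having at least one vertex), t(H, W_G) = t(H, G), where W_G is the pixel graphon of G. -/
open MeasureTheory

attribute [local instance] MeasureTheory.Measure.Subtype.measureSpace

noncomputable section

/-- The unit interval `[0,1]` as a measure space (with Lebesgue measure). -/
abbrev unitI : Type := Set.Icc (0 : ℝ) 1

/-- A (labeled) graphon: a symmetric, measurable function `[0,1]² → [0,1]`. -/
structure Graphon where
  toFun : unitI → unitI → ℝ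
  measurable' : Measurable (Function.uncurry toFun)
  symm' : ∀ x y, toFun x y = toFun y x
  nonneg' : ∀ x y, 0 ≤ toFun x y
  le_one' : ∀ x y, toFun x y ≤ 1

/-- The cut distance between two (labeled) graphons: the infimum, over pairs of invertible
measure-preserving re-labelings `φ, ψ` of `[0,1]`, of the supremum over measurable sets
`S, T ⊆ [0,1]` of `|∫_{S×T} (W(φx,φy) - U(ψx,ψy))|`. -/
def cutDist (W U : Graphon) : ℝ :=
  ⨅ p : {p : (unitI ≃ᵐ unitI) × (unitI ≃ᵐ unitI) //
      MeasurePreserving p.1 volume volume ∧ MeasurePreserving p.2 volume volume},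
    ⨆ ST : {ST : Set unitI × Set unitI // MeasurableSet ST.1 ∧ MeasurableSet ST.2},
      |∫ q in ST.1.1 ×ˢ ST.1.2,
        (W.toFun (p.1.1 q.1) (p.1.1 q.2) - U.toFun (p.1.2 q.1) (p.1.2 q.2))|

/-- The index in `Fin n` of the pixel containing `x ∈ [0,1]`; for `x ∈ ((i-1)/n, i/n]`
this is `⌈n x⌉ - 1 = i - 1`, corresponding to the vertex labeled `i` in `{1, …, n}`. -/
def pixelIdx (n : ℕ) (hn : 0 < n) (x : unitI) : Fin n :=
  ⟨min (n - 1) (⌈(n : ℝ) * x.1⌉₊ - 1), lt_of_le_of_lt (min_le_left _ _) (Nat.sub_lt hn one_pos)⟩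

lemma measurable_pixelIdx (n : ℕ) (hn : 0 < n) : Measurable (pixelIdx n hn) := by
  have h1 : Measurable fun x : unitI => ⌈(n : ℝ) * x.1⌉₊ :=
    (Nat.measurable_ceil.comp (measurable_const.mul measurable_subtype_coe))
  exact (measurable_from_top (f := fun m : ℕ =>
    (⟨min (n - 1) (m - 1), lt_of_le_of_lt (min_le_left _ _) (Nat.sub_lt hn one_pos)⟩ : Fin n))).comp h1

open scoped Classical in
/-- The pixel graphon of a finite simple graph `G` on vertex set `Fin n`. -/
def pixelGraphon {n : ℕ} (hn : 0 < n) (G : SimpleGraph (Fin n)) : Graphon where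
  toFun x y := if G.Adj (pixelIdx n hn x) (pixelIdx n hn y) then 1 else 0
  measurable' := by
    apply Measurable.ite _ measurable_const measurable_const
    have : Measurable fun q : unitI × unitI => (pixelIdx n hn q.1, pixelIdx n hn q.2) :=
      ((measurable_pixelIdx n hn).comp measurable_fst).prodMk
        ((measurable_pixelIdx n hn).comp measurable_snd)
    exact this ((Set.toFinite {q : Fin n × Fin n | G.Adj q.1 q.2}).measurableSet)
  symm' := by
    intro x y
    simp only [SimpleGraph.adj_comm]
  nonneg' := by intro x y; split <;> norm_num
  le_one' := by intro x y; split <;> norm_num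

open scoped Classical in
/-- The homomorphism density `t(H, W)` of a finite simple graph `H` in a graphon `W`. -/
def homDensityG {k : ℕ} (H : SimpleGraph (Fin k)) (W : Graphon) : ℝ :=
  ∫ x : Fin k → unitI, ∏ e ∈ H.edgeFinset,
    Sym2.lift ⟨fun i j => W.toFun (x i) (x j), fun i j => W.symm' (x i) (x j)⟩ e

/-- The number of graph homomorphisms from `H` to `G`. -/
def homCount {k n : ℕ} (H : SimpleGraph (Fin k)) (G : SimpleGraph (Fin n)) : ℕ :=
  Nat.card (H →g G)

/-- The homomorphism density `t(H, G) = hom(H, G) / n ^ k` of `H` in a graph `G` on `n` vertices. -/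
def homDensity {k n : ℕ} (H : SimpleGraph (Fin k)) (G : SimpleGraph (Fin n)) : ℝ :=
  (homCount H G : ℝ) / (n : ℝ) ^ k

/-- The 4-cycle `C₄`. -/
def C4 : SimpleGraph (Fin 4) := SimpleGraph.cycleGraph 4

/-- The single edge `K₂`. -/
def K2 : SimpleGraph (Fin 2) := ⊤

lemma pixel_preimage (n : ℕ) (hn : 0 < n) (a : Fin n) :
    pixelIdx n hn ⁻¹' {a} = Subtype.val ⁻¹'
      (if a.1 = 0 then Set.Icc 0 (1/(n:ℝ)) else Set.Ioc ((a.1:ℝ)/n) ((a.1+1:ℝ)/n)) := by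
  ext x
  obtain ⟨x, hx0, hx1⟩ := x
  have hnR : (0:ℝ) < n := Nat.cast_pos.mpr hn
  have hceil : ⌈(n:ℝ) * x⌉₊ ≤ n := by
    rw [Nat.ceil_le]
    calc (n:ℝ) * x ≤ n * 1 := by nlinarith
    _ = n := by ring
  simp only [pixelIdx, Set.mem_preimage, Set.mem_singleton_iff, Fin.ext_iff]
  rcases Nat.eq_zero_or_pos a.1 with ha | ha
  · simp only [ha, if_pos rfl, Set.mem_Icc]
    constructor
    · intro h
      refine ⟨hx0, ?_⟩
      rcases Nat.eq_or_lt_of_le hn with h1 | h1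
      · rw [← h1]; simpa using hx1
      · have hn1 : 1 ≤ n - 1 := by omega
        have : ⌈(n:ℝ) * x⌉₊ - 1 = 0 := by omega
        have hle : ⌈(n:ℝ) * x⌉₊ ≤ 1 := by omega
        have h2 := (Nat.ceil_le).mp hle
        rw [le_div_iff₀ hnR]
        push_cast at h2
        linarith
    · rintro ⟨-, hle⟩
      have : (n:ℝ) * x ≤ 1 := by
        rw [le_div_iff₀ hnR] at hle; linarith
      have h1 : ⌈(n:ℝ) * x⌉₊ ≤ 1 := by
        rw [Nat.ceil_le]; exact_mod_cast this
      omega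
  · have ha0 : a.1 ≠ 0 := Nat.pos_iff_ne_zero.mp ha
    simp only [if_neg ha0, Set.mem_Ioc]
    have han : a.1 ≤ n - 1 := by have := a.2; omega
    constructor
    · intro h
      have hmin : ⌈(n:ℝ) * x⌉₊ - 1 = a.1 := by omega
      have hc : ⌈(n:ℝ) * x⌉₊ = a.1 + 1 := by omega
      have h2 := Nat.ceil_eq_iff (by omega : a.1 + 1 ≠ 0) |>.mp hc
      obtain ⟨hlt, hle⟩ := h2
      push_cast at hlt hle
      constructor
      · rw [div_lt_iff₀ hnR]; linarith
      · rw [le_div_iff₀ hnR]; linarith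
    · rintro ⟨hlt, hle⟩
      rw [div_lt_iff₀ hnR] at hlt
      rw [le_div_iff₀ hnR] at hle
      have hc : ⌈(n:ℝ) * x⌉₊ = a.1 + 1 := by
        rw [Nat.ceil_eq_iff (by omega)]
        push_cast
        constructor <;> linarith
      omega

lemma volume_pixel_preimage (n : ℕ) (hn : 0 < n) (a : Fin n) :
    volume (pixelIdx n hn ⁻¹' {a}) = ENNReal.ofReal (1/(n:ℝ)) := by
  have hnR : (0:ℝ) < n := Nat.cast_pos.mpr hn
  rw [pixel_preimage n hn a]
  rcases eq_or_ne a.1 0 with ha | ha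
  · rw [if_pos ha, volume_preimage_coe measurableSet_Icc.nullMeasurableSet measurableSet_Icc]
    have : Set.Icc 0 (1/(n:ℝ)) ∩ Set.Icc 0 1 = Set.Icc 0 (1/(n:ℝ)) := by
      apply Set.inter_eq_left.mpr
      apply Set.Icc_subset_Icc le_rfl
      rw [div_le_one hnR]; exact_mod_cast hn
    rw [this, Real.volume_Icc, sub_zero]
  · rw [if_neg ha, volume_preimage_coe measurableSet_Icc.nullMeasurableSet measurableSet_Ioc]
    have han : (a.1:ℝ) + 1 ≤ n := by exact_mod_cast a.2
    have : Set.Ioc ((a.1:ℝ)/n) ((a.1+1:ℝ)/n) ∩ Set.Icc 0 1 = Set.Ioc ((a.1:ℝ)/n) ((a.1+1:ℝ)/n) := by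
      apply Set.inter_eq_left.mpr
      intro x hx
      obtain ⟨h1, h2⟩ := hx
      constructor
      · have : (0:ℝ) ≤ (a.1:ℝ)/n := by positivity
        linarith
      · rw [le_div_iff₀ hnR] at h2; nlinarith
    rw [this, Real.volume_Ioc]
    congr 1
    field_simp
    ring

lemma hom_count_eq {k n : ℕ} (H : SimpleGraph (Fin k)) (G : SimpleGraph (Fin n)) :
    Nat.card (H →g G) = Nat.card {φ : Fin k → Fin n // ∀ i j, H.Adj i j → G.Adj (φ i) (φ j)} :=
  Nat.card_congr
    { toFun := fun f => ⟨f, fun i j h => f.map_rel h⟩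
      invFun := fun φ => ⟨φ.1, fun {i j} h => φ.2 i j h⟩
      left_inv := fun f => rfl
      right_inv := fun φ => rfl }

open scoped Classical in
lemma prod_lift_eq {k n : ℕ} (H : SimpleGraph (Fin k)) (G : SimpleGraph (Fin n))
    (ψ : Fin k → Fin n) :
    (∏ e ∈ H.edgeFinset, Sym2.lift ⟨fun i j => if G.Adj (ψ i) (ψ j) then (1:ℝ) else 0,
        fun i j => by simp [SimpleGraph.adj_comm]⟩ e) =
      if (∀ i j, H.Adj i j → G.Adj (ψ i) (ψ j)) then 1 else 0 := by
  split_ifs with h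
  · refine Finset.prod_eq_one fun e he => ?_
    induction e with
    | _ i j =>
      rw [SimpleGraph.mem_edgeFinset, SimpleGraph.mem_edgeSet] at he
      simp [h i j he]
  · push_neg at h
    obtain ⟨i, j, hij, hG⟩ := h
    refine Finset.prod_eq_zero (i := s(i, j)) ?_ ?_
    · rw [SimpleGraph.mem_edgeFinset, SimpleGraph.mem_edgeSet]; exact hij
    · simp [hG]

open scoped Classical in
lemma pixel_fiber_volume {k n : ℕ} (hn : 0 < n) (φ : Fin k → Fin n) :
    volume ((fun x : Fin k → unitI => fun i => pixelIdx n hn (x i)) ⁻¹' {φ}) =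
      ENNReal.ofReal (1/(n:ℝ)) ^ k := by
  have : (fun x : Fin k → unitI => fun i => pixelIdx n hn (x i)) ⁻¹' {φ} =
      Set.pi Set.univ (fun i => pixelIdx n hn ⁻¹' {φ i}) := by
    ext x
    simp [funext_iff, Set.mem_pi]
  rw [this, volume_pi_pi]
  simp [volume_pixel_preimage n hn]

theorem homDensityG_pixelGraphon' {k n : ℕ} (hn : 0 < n) (H : SimpleGraph (Fin k))
    (G : SimpleGraph (Fin n)) :
    homDensityG H (pixelGraphon hn G) = homDensity H G := by
  classical
  have hnR : (0:ℝ) < n := Nat.cast_pos.mpr hn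
  set p : (Fin k → unitI) → (Fin k → Fin n) := fun x i => pixelIdx n hn (x i) with hp
  set F : (Fin k → Fin n) → ℝ :=
    fun φ => if (∀ i j, H.Adj i j → G.Adj (φ i) (φ j)) then 1 else 0 with hF
  have hpmeas : Measurable p :=
    measurable_pi_lambda _ fun i => (measurable_pixelIdx n hn).comp (measurable_pi_apply i)
  have hAmeas : ∀ φ, MeasurableSet (p ⁻¹' {φ}) := fun φ =>
    hpmeas (measurableSet_singleton φ)
  have hintegrand : ∀ x : Fin k → unitI,
      (∏ e ∈ H.edgeFinset, Sym2.lift ⟨fun i j => (pixelGraphon hn G).toFun (x i) (x j),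
        fun i j => (pixelGraphon hn G).symm' (x i) (x j)⟩ e) = F (p x) := by
    intro x
    simp only [hF]
    rw [← prod_lift_eq H G (p x)]
    refine Finset.prod_congr rfl fun e he => ?_
    induction e with
    | _ i j => simp [pixelGraphon, hp]
  have hsum : ∀ x : Fin k → unitI,
      F (p x) = ∑ φ : Fin k → Fin n, Set.indicator (p ⁻¹' {φ}) (fun _ => F φ) x := by
    intro x
    have : ∀ φ : Fin k → Fin n,
        Set.indicator (p ⁻¹' {φ}) (fun _ => F φ) x = if p x = φ then F φ else 0 := by
      intro φ; rw [Set.indicator_apply]; simp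
    simp only [this]
    rw [Finset.sum_ite_eq Finset.univ (p x) F]
    simp
  rw [homDensityG]
  calc (∫ x : Fin k → unitI, ∏ e ∈ H.edgeFinset,
        Sym2.lift ⟨fun i j => (pixelGraphon hn G).toFun (x i) (x j),
          fun i j => (pixelGraphon hn G).symm' (x i) (x j)⟩ e)
      = ∫ x : Fin k → unitI, ∑ φ : Fin k → Fin n,
          Set.indicator (p ⁻¹' {φ}) (fun _ => F φ) x := by
        congr 1; funext x; rw [hintegrand x, hsum x]
    _ = ∑ φ : Fin k → Fin n, ∫ x : Fin k → unitI,
          Set.indicator (p ⁻¹' {φ}) (fun _ => F φ) x := by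
        refine integral_finset_sum _ fun φ _ => ?_
        exact (integrable_const (F φ)).indicator (hAmeas φ)
    _ = ∑ φ : Fin k → Fin n, (volume (p ⁻¹' {φ})).toReal • F φ := by
        refine Finset.sum_congr rfl fun φ _ => ?_
        rw [integral_indicator (hAmeas φ), setIntegral_const]
        rfl
    _ = ∑ φ : Fin k → Fin n, (1/(n:ℝ))^k * F φ := by
        refine Finset.sum_congr rfl fun φ _ => ?_
        rw [pixel_fiber_volume hn φ, smul_eq_mul, ENNReal.toReal_pow,
          ENNReal.toReal_ofReal (by positivity)]
    _ = (1/(n:ℝ))^k * ∑ φ : Fin k → Fin n, F φ := by rw [Finset.mul_sum]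
    _ = homDensity H G := by
        simp only [hF]
        rw [Finset.sum_boole, ← Fintype.card_subtype, ← Nat.card_eq_fintype_card,
          ← hom_count_eq H G, homDensity, homCount]
        field_simp
        rw [one_div, inv_pow, mul_comm, ← mul_assoc, mul_inv_cancel₀ (pow_ne_zero k hnR.ne'), one_mul]

/-- The homomorphism density into a graphon extends the homomorphism density into a graph:
`t(H, W_G) = t(H, G)`. -/
theorem homDensityG_pixelGraphon {k n : ℕ} (hn : 0 < n) (H : SimpleGraph (Fin k))
    (G : SimpleGraph (Fin n)) :
    homDensityG H (pixelGraphon hn G) = homDensity H G :=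
  homDensityG_pixelGraphon' hn H G
end
end

section
/- The constant graphon W ≡ 1/2 solves the minimization problem for 4-cycle density among graphons of edge density at least 1/2: t(K₂, W) = 1/2, t(C₄, W) = 1/16, and for every graphon U with t(K₂, U) ≥ 1/2 one has t(C₄, U) ≥ 1/16 = t(C₄, W). -/
open MeasureTheory

attribute [local instance] MeasureTheory.Measure.Subtype.measureSpace

noncomputable section

/-- The edge density `t(K₂, W)` of a graphon. -/
def edgeDensityG (W : Graphon) : ℝ := ∫ p : unitI × unitI, W.toFun p.1 p.2

/-- The 4-cycle density `t(C₄, W)` of a graphon. -/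
def cycle4DensityG (W : Graphon) : ℝ :=
  ∫ x : Fin 4 → unitI,
    W.toFun (x 0) (x 1) * W.toFun (x 1) (x 2) * W.toFun (x 2) (x 3) * W.toFun (x 3) (x 0)

/-- The constant graphon `W ≡ 1/2`. -/
def halfGraphon : Graphon where
  toFun _ _ := 1/2
  measurable' := measurable_const
  symm' := fun _ _ => rfl
  nonneg' := fun _ _ => by norm_num
  le_one' := fun _ _ => by norm_num

instance : IsProbabilityMeasure (volume : Measure unitI) := by
  constructor
  rw [Measure.Subtype.volume_univ nullMeasurableSet_Icc, Real.volume_Icc]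
  norm_num

namespace C4Aux


lemma intBdd {α : Type*} [MeasurableSpace α] {μ : Measure α} [IsFiniteMeasure μ] {f : α → ℝ}
    (hm : AEStronglyMeasurable f μ) (h0 : ∀ x, 0 ≤ f x) (h1 : ∀ x, f x ≤ 1) :
    Integrable f μ :=
  ⟨hm, HasFiniteIntegral.of_bounded (C := 1) (ae_of_all _ fun x => by
    rw [Real.norm_eq_abs, abs_of_nonneg (h0 x)]; exact h1 x)⟩

lemma intLeOne {α : Type*} [MeasurableSpace α] {μ : Measure α} [IsProbabilityMeasure μ]
    {f : α → ℝ} (hm : AEStronglyMeasurable f μ) (h0 : ∀ x, 0 ≤ f x) (h1 : ∀ x, f x ≤ 1) :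
    ∫ x, f x ∂μ ≤ 1 := by
  calc ∫ x, f x ∂μ ≤ ∫ _x, (1 : ℝ) ∂μ := integral_mono (intBdd hm h0 h1) (integrable_const _) h1
  _ = 1 := by simp

lemma sq_int_le {α : Type*} [MeasurableSpace α] {μ : Measure α} [IsProbabilityMeasure μ]
    {f : α → ℝ} (hm : AEStronglyMeasurable f μ) (h0 : ∀ x, 0 ≤ f x) (h1 : ∀ x, f x ≤ 1) :
    (∫ x, f x ∂μ) ^ 2 ≤ ∫ x, (f x) ^ 2 ∂μ := by
  have hmem : MemLp f 2 μ := MemLp.of_bound hm 1 (ae_of_all _ fun x => by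
    rw [Real.norm_eq_abs, abs_of_nonneg (h0 x)]; exact h1 x)
  have h := ProbabilityTheory.variance_nonneg f μ
  rw [ProbabilityTheory.variance_eq_sub hmem] at h
  have h2 : ∫ x, (f ^ 2) x ∂μ = ∫ x, (f x) ^ 2 ∂μ := by simp [Pi.pow_apply]
  linarith [h2 ▸ h]


variable (U : Graphon)


lemma hWm : Measurable (fun p : unitI × unitI => U.toFun p.1 p.2) := U.measurable'

def dU : unitI → ℝ := fun b => ∫ a, U.toFun a b

lemma dU_sm : StronglyMeasurable (dU U) := by
  have h : StronglyMeasurable (Function.uncurry (fun b a => U.toFun a b)) :=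
    ((hWm U).comp measurable_swap).stronglyMeasurable
  exact h.integral_prod_right

lemma dU_nonneg (b : unitI) : 0 ≤ dU U b := integral_nonneg fun a => U.nonneg' a b

lemma dU_le_one (b : unitI) : dU U b ≤ 1 :=
  intLeOne ((hWm U).comp (measurable_id.prodMk measurable_const)).aestronglyMeasurable
    (fun a => U.nonneg' a b) (fun a => U.le_one' a b)

def GU : unitI × unitI → ℝ := fun p => ∫ b, U.toFun p.1 b * U.toFun b p.2

lemma GU_m : Measurable (GU U) := by
  have h : StronglyMeasurable (Function.uncurry
      (fun (p : unitI × unitI) b => U.toFun p.1 b * U.toFun b p.2)) := by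
    apply Measurable.stronglyMeasurable
    exact ((hWm U).comp (measurable_fst.fst.prodMk measurable_snd)).mul
      ((hWm U).comp (measurable_snd.prodMk measurable_fst.snd))
  exact h.integral_prod_right.measurable

lemma GU_nonneg (p : unitI × unitI) : 0 ≤ GU U p :=
  integral_nonneg fun b => mul_nonneg (U.nonneg' _ _) (U.nonneg' _ _)

lemma GU_le_one (p : unitI × unitI) : GU U p ≤ 1 :=
  intLeOne (((hWm U).comp (measurable_const.prodMk measurable_id)).mul
      ((hWm U).comp (measurable_id.prodMk measurable_const))).aestronglyMeasurable
    (fun b => mul_nonneg (U.nonneg' _ _) (U.nonneg' _ _))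
    (fun b => mul_le_one₀ (U.le_one' _ _) (U.nonneg' _ _) (U.le_one' _ _))


lemma edge_eq : edgeDensityG U = ∫ b, dU U b := by
  rw [edgeDensityG, Measure.volume_eq_prod,
    integral_prod _ (intBdd (hWm U).aestronglyMeasurable (fun p => U.nonneg' _ _)
      (fun p => U.le_one' _ _))]
  have h : ∀ a : unitI, ∫ b, U.toFun a b = dU U a := fun a => by
    unfold dU; congr 1; funext b; exact U.symm' a b
  simp_rw [h]

lemma int_G_eq : ∫ p : unitI × unitI, GU U p = ∫ b, (dU U b) ^ 2 := by
  rw [Measure.volume_eq_prod,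
    integral_prod _ (intBdd (GU_m U).aestronglyMeasurable (GU_nonneg U) (GU_le_one U))]
  have h1 : ∀ a : unitI, (∫ c, GU U (a, c)) = ∫ b, U.toFun a b * dU U b := fun a => by
    have hs : Integrable (Function.uncurry fun (c b : unitI) => U.toFun a b * U.toFun b c)
        (volume.prod volume) := by
      refine intBdd ?_ (fun q => mul_nonneg (U.nonneg' _ _) (U.nonneg' _ _))
        (fun q => mul_le_one₀ (U.le_one' _ _) (U.nonneg' _ _) (U.le_one' _ _))
      exact (((hWm U).comp (measurable_const.prodMk measurable_snd)).mul
        ((hWm U).comp (measurable_snd.prodMk measurable_fst))).aestronglyMeasurable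
    have : (fun c => GU U (a, c)) = fun c => ∫ b, U.toFun a b * U.toFun b c := rfl
    rw [this, integral_integral_swap hs]
    congr 1; funext b
    rw [integral_const_mul]
    congr 1
    unfold dU; congr 1; funext c; exact U.symm' b c
  simp_rw [h1]
  have hs2 : Integrable (Function.uncurry fun (a b : unitI) => U.toFun a b * dU U b)
      (volume.prod volume) := by
    refine intBdd ?_
      (fun q => mul_nonneg (U.nonneg' _ _) (dU_nonneg U _))
      (fun q => mul_le_one₀ (U.le_one' _ _) (dU_nonneg U _) (dU_le_one U _))
    exact ((hWm U).mul ((dU_sm U).measurable.comp measurable_snd)).aestronglyMeasurable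
  rw [integral_integral_swap hs2]
  congr 1; funext b
  rw [integral_mul_const, sq]
  rfl


lemma measurable_consP {n : ℕ} :
    Measurable (fun p : unitI × (Fin n → unitI) => (Fin.cons p.1 p.2 : Fin (n+1) → unitI)) := by
  apply measurable_pi_iff.mpr
  intro i
  refine Fin.cases ?_ ?_ i
  · simpa using measurable_fst
  · intro j; simpa using (show Measurable fun x : unitI × (Fin n → unitI) => x.2 j from (measurable_pi_apply j).comp measurable_snd)

lemma measurable_consA {n : ℕ} (a : unitI) :
    Measurable (fun y : Fin n → unitI => (Fin.cons a y : Fin (n+1) → unitI)) := by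
  apply measurable_pi_iff.mpr
  intro i
  refine Fin.cases ?_ ?_ i
  · simpa using measurable_const
  · intro j; simpa using measurable_pi_apply j

lemma integral_pi_succ {n : ℕ} (f : (Fin (n+1) → unitI) → ℝ) :
    ∫ x, f x = ∫ p : unitI × (Fin n → unitI), f (Fin.cons p.1 p.2) := by
  rw [← ((volume_preserving_piFinSuccAbove (fun _ : Fin (n+1) => unitI) 0).symm).integral_comp
    (MeasurableEquiv.measurableEmbedding _) f]
  congr 1
  funext p
  congr 1
  funext i
  refine Fin.cases ?_ ?_ i
  · simp [MeasurableEquiv.piFinSuccAbove]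
  · intro j; simp [MeasurableEquiv.piFinSuccAbove]

lemma integral_pi_one (f : (Fin 1 → unitI) → ℝ) : ∫ x, f x = ∫ t, f (fun _ => t) := by
  exact ((MeasurePreserving.symm _ (volume_preserving_funUnique (Fin 1) unitI)).integral_comp
    (MeasurableEquiv.measurableEmbedding _) f).symm



lemma F_meas : Measurable (fun x : Fin 4 → unitI =>
    U.toFun (x 0) (x 1) * U.toFun (x 1) (x 2) * U.toFun (x 2) (x 3) * U.toFun (x 3) (x 0)) := by
  have h : ∀ i j : Fin 4, Measurable fun x : Fin 4 → unitI => U.toFun (x i) (x j) := by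
    intro i j
    have hp : Measurable fun x : Fin 4 → unitI => ((x i, x j) : unitI × unitI) :=
      (measurable_pi_apply i).prodMk (measurable_pi_apply j)
    exact (hWm U).comp hp
  exact (((h 0 1).mul (h 1 2)).mul (h 2 3)).mul (h 3 0)

lemma F_nonneg (x : Fin 4 → unitI) : 0 ≤
    U.toFun (x 0) (x 1) * U.toFun (x 1) (x 2) * U.toFun (x 2) (x 3) * U.toFun (x 3) (x 0) :=
  mul_nonneg (mul_nonneg (mul_nonneg (U.nonneg' _ _) (U.nonneg' _ _)) (U.nonneg' _ _))
    (U.nonneg' _ _)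

lemma F_le_one (x : Fin 4 → unitI) :
    U.toFun (x 0) (x 1) * U.toFun (x 1) (x 2) * U.toFun (x 2) (x 3) * U.toFun (x 3) (x 0) ≤ 1 :=
  mul_le_one₀ (mul_le_one₀ (mul_le_one₀ (U.le_one' _ _) (U.nonneg' _ _) (U.le_one' _ _))
    (U.nonneg' _ _) (U.le_one' _ _)) (U.nonneg' _ _) (U.le_one' _ _)

lemma cyc_iter : cycle4DensityG U = ∫ a, ∫ b, ∫ c, ∫ t,
    U.toFun a b * U.toFun b c * U.toFun c t * U.toFun t a := by
  have m1 : Measurable (fun p : unitI × (Fin 3 → unitI) => U.toFun (((Fin.cons p.1 p.2 : Fin 4 → unitI)) 0) (((Fin.cons p.1 p.2 : Fin 4 → unitI)) 1) * U.toFun (((Fin.cons p.1 p.2 : Fin 4 → unitI)) 1) (((Fin.cons p.1 p.2 : Fin 4 → unitI)) 2) * U.toFun (((Fin.cons p.1 p.2 : Fin 4 → unitI)) 2) (((Fin.cons p.1 p.2 : Fin 4 → unitI)) 3) * U.toFun (((Fin.cons p.1 p.2 : Fin 4 → unitI)) 3) (((Fin.cons p.1 p.2 : Fin 4 → unitI))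 0)) :=
    (F_meas U).comp measurable_consP
  rw [cycle4DensityG, integral_pi_succ (fun x : Fin 4 → unitI =>
    U.toFun (x 0) (x 1) * U.toFun (x 1) (x 2) * U.toFun (x 2) (x 3) * U.toFun (x 3) (x 0))]
  rw [Measure.volume_eq_prod, integral_prod (fun p : unitI × (Fin 3 → unitI) =>
    U.toFun (((Fin.cons p.1 p.2 : Fin 4 → unitI)) 0) (((Fin.cons p.1 p.2 : Fin 4 → unitI)) 1) * U.toFun (((Fin.cons p.1 p.2 : Fin 4 → unitI)) 1) (((Fin.cons p.1 p.2 : Fin 4 → unitI)) 2) * U.toFun (((Fin.cons p.1 p.2 : Fin 4 → unitI)) 2) (((Fin.cons p.1 p.2 : Fin 4 → unitI)) 3) * U.toFun (((Fin.cons p.1 p.2 : Fin 4 → unitI)) 3) (((Fin.cons p.1 p.2 : Fin 4 → unitI)) 0))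
    (intBdd m1.aestronglyMeasurable (fun p => F_nonneg U _) (fun p => F_le_one U _))]
  congr 1; funext a
  have m2 : Measurable (fun p : unitI × (Fin 2 → unitI) => U.toFun (((Fin.cons a (Fin.cons p.1 p.2) : Fin 4 → unitI)) 0) (((Fin.cons a (Fin.cons p.1 p.2) : Fin 4 → unitI)) 1) * U.toFun (((Fin.cons a (Fin.cons p.1 p.2) : Fin 4 → unitI)) 1) (((Fin.cons a (Fin.cons p.1 p.2) : Fin 4 → unitI)) 2) * U.toFun (((Fin.cons a (Fin.cons p.1 p.2) : Fin 4 → unitI)) 2) (((Fin.cons a (Fin.cons p.1 p.2) : Fin 4 → unitI)) 3) * U.toFun (((Fin.cons a (Fin.cons p.1 p.2) : Fin 4 → unitI)) 3) (((Fin.cons a (Fin.cons p.1 p.2) : Fin 4 → unitI)) 0)) :=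
    (F_meas U).comp ((measurable_consA a).comp measurable_consP)
  rw [integral_pi_succ (fun y : Fin 3 → unitI => U.toFun (((Fin.cons a y : Fin 4 → unitI)) 0) (((Fin.cons a y : Fin 4 → unitI)) 1) * U.toFun (((Fin.cons a y : Fin 4 → unitI)) 1) (((Fin.cons a y : Fin 4 → unitI)) 2) * U.toFun (((Fin.cons a y : Fin 4 → unitI)) 2) (((Fin.cons a y : Fin 4 → unitI)) 3) * U.toFun (((Fin.cons a y : Fin 4 → unitI)) 3) (((Fin.cons a y : Fin 4 → unitI)) 0))]
  rw [Measure.volume_eq_prod, integral_prod (fun p : unitI × (Fin 2 → unitI) =>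
    U.toFun (((Fin.cons a (Fin.cons p.1 p.2) : Fin 4 → unitI)) 0) (((Fin.cons a (Fin.cons p.1 p.2) : Fin 4 → unitI)) 1) * U.toFun (((Fin.cons a (Fin.cons p.1 p.2) : Fin 4 → unitI)) 1) (((Fin.cons a (Fin.cons p.1 p.2) : Fin 4 → unitI)) 2) * U.toFun (((Fin.cons a (Fin.cons p.1 p.2) : Fin 4 → unitI)) 2) (((Fin.cons a (Fin.cons p.1 p.2) : Fin 4 → unitI)) 3) * U.toFun (((Fin.cons a (Fin.cons p.1 p.2) : Fin 4 → unitI)) 3) (((Fin.cons a (Fin.cons p.1 p.2) : Fin 4 → unitI)) 0))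
    (intBdd m2.aestronglyMeasurable (fun p => F_nonneg U _) (fun p => F_le_one U _))]
  congr 1; funext b
  have m3 : Measurable (fun p : unitI × (Fin 1 → unitI) => U.toFun (((Fin.cons a (Fin.cons b (Fin.cons p.1 p.2)) : Fin 4 → unitI)) 0) (((Fin.cons a (Fin.cons b (Fin.cons p.1 p.2)) : Fin 4 → unitI)) 1) * U.toFun (((Fin.cons a (Fin.cons b (Fin.cons p.1 p.2)) : Fin 4 → unitI)) 1) (((Fin.cons a (Fin.cons b (Fin.cons p.1 p.2)) : Fin 4 → unitI)) 2) * U.toFun (((Fin.cons a (Fin.cons b (Fin.cons p.1 p.2)) : Fin 4 → unitI)) 2) (((Fin.cons a (Fin.cons b (Fin.cons p.1 p.2)) : Fin 4 → unitI)) 3) * U.toFun (((Fin.cons a (Fin.cons b (Fin.cons p.1 p.2)) : Fin 4 → unitI)) 3) (((Fin.cons a (Fin.cons b (Fin.cons p.1 p.2)) : Fin 4 → unitI)) 0)) :=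
    (F_meas U).comp ((measurable_consA a).comp ((measurable_consA b).comp measurable_consP))
  rw [integral_pi_succ (fun z : Fin 2 → unitI => U.toFun (((Fin.cons a (Fin.cons b z) : Fin 4 → unitI)) 0) (((Fin.cons a (Fin.cons b z) : Fin 4 → unitI)) 1) * U.toFun (((Fin.cons a (Fin.cons b z) : Fin 4 → unitI)) 1) (((Fin.cons a (Fin.cons b z) : Fin 4 → unitI)) 2) * U.toFun (((Fin.cons a (Fin.cons b z) : Fin 4 → unitI)) 2) (((Fin.cons a (Fin.cons b z) : Fin 4 → unitI)) 3) * U.toFun (((Fin.cons a (Fin.cons b z) : Fin 4 → unitI)) 3) (((Fin.cons a (Fin.cons b z) : Fin 4 → unitI)) 0))]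
  rw [Measure.volume_eq_prod, integral_prod (fun p : unitI × (Fin 1 → unitI) =>
    U.toFun (((Fin.cons a (Fin.cons b (Fin.cons p.1 p.2)) : Fin 4 → unitI)) 0) (((Fin.cons a (Fin.cons b (Fin.cons p.1 p.2)) : Fin 4 → unitI)) 1) * U.toFun (((Fin.cons a (Fin.cons b (Fin.cons p.1 p.2)) : Fin 4 → unitI)) 1) (((Fin.cons a (Fin.cons b (Fin.cons p.1 p.2)) : Fin 4 → unitI)) 2) * U.toFun (((Fin.cons a (Fin.cons b (Fin.cons p.1 p.2)) : Fin 4 → unitI)) 2) (((Fin.cons a (Fin.cons b (Fin.cons p.1 p.2)) : Fin 4 → unitI)) 3) * U.toFun (((Fin.cons a (Fin.cons b (Fin.cons p.1 p.2)) : Fin 4 → unitI)) 3) (((Fin.cons a (Fin.cons b (Fin.cons p.1 p.2)) : Fin 4 → unitI)) 0))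
    (intBdd m3.aestronglyMeasurable (fun p => F_nonneg U _) (fun p => F_le_one U _))]
  congr 1; funext c
  rw [integral_pi_one (fun w : Fin 1 → unitI => U.toFun (((Fin.cons a (Fin.cons b (Fin.cons c w)) : Fin 4 → unitI)) 0) (((Fin.cons a (Fin.cons b (Fin.cons c w)) : Fin 4 → unitI)) 1) * U.toFun (((Fin.cons a (Fin.cons b (Fin.cons c w)) : Fin 4 → unitI)) 1) (((Fin.cons a (Fin.cons b (Fin.cons c w)) : Fin 4 → unitI)) 2) * U.toFun (((Fin.cons a (Fin.cons b (Fin.cons c w)) : Fin 4 → unitI)) 2) (((Fin.cons a (Fin.cons b (Fin.cons c w)) : Fin 4 → unitI)) 3) * U.toFun (((Fin.cons a (Fin.cons b (Fin.cons c w)) : Fin 4 → unitI)) 3) (((Fin.cons a (Fin.cons b (Fin.cons c w)) : Fin 4 → unitI)) 0))]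
  rfl

lemma cyc_eq : cycle4DensityG U = ∫ p : unitI × unitI, (GU U p) ^ 2 := by
  rw [cyc_iter]
  rw [Measure.volume_eq_prod, integral_prod (fun p : unitI × unitI => (GU U p) ^ 2) (intBdd
    ((GU_m U).pow_const 2).aestronglyMeasurable
    (fun p => sq_nonneg _) (fun p => pow_le_one₀ (GU_nonneg U p) (GU_le_one U p)))]
  congr 1; funext a
  have step1 : ∀ b c : unitI, (∫ t, U.toFun a b * U.toFun b c * U.toFun c t * U.toFun t a)
      = (U.toFun a b * U.toFun b c) * GU U (a, c) := by
    intro b c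
    have h : ∀ t : unitI, U.toFun a b * U.toFun b c * U.toFun c t * U.toFun t a
        = (U.toFun a b * U.toFun b c) * (U.toFun a t * U.toFun t c) := fun t => by
      rw [U.symm' c t, U.symm' t a]; ring
    simp_rw [h]
    rw [integral_const_mul]
    rfl
  simp_rw [step1]
  have hs : Integrable (Function.uncurry fun (b c : unitI) =>
      (U.toFun a b * U.toFun b c) * GU U (a, c)) (volume.prod volume) := by
    refine intBdd ?_
      (fun q => mul_nonneg (mul_nonneg (U.nonneg' _ _) (U.nonneg' _ _)) (GU_nonneg U _))
      (fun q => mul_le_one₀ (mul_le_one₀ (U.le_one' _ _) (U.nonneg' _ _) (U.le_one' _ _))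
        (GU_nonneg U _) (GU_le_one U _))
    exact ((((hWm U).comp (measurable_const.prodMk measurable_fst)).mul
      ((hWm U).comp (measurable_fst.prodMk measurable_snd))).mul
      ((GU_m U).comp (measurable_const.prodMk measurable_snd))).aestronglyMeasurable
  rw [integral_integral_swap hs]
  congr 1; funext c
  rw [integral_mul_const, sq]
  congr 1

end C4Aux

/-- The constant graphon `W ≡ 1/2` solves the minimization problem for the 4-cycle density
among graphons of edge density at least `1/2`. -/
theorem halfGraphon_minimizes_cycle4_density :
    edgeDensityG halfGraphon = 1/2 ∧ cycle4DensityG halfGraphon = 1/16 ∧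
      ∀ U : Graphon, edgeDensityG U ≥ 1/2 → cycle4DensityG U ≥ 1/16 := by
  refine ⟨?_, ?_, ?_⟩
  · show (∫ p : unitI × unitI, halfGraphon.toFun p.1 p.2) = 1/2
    simp [halfGraphon]
  · show (∫ x : Fin 4 → unitI, halfGraphon.toFun (x 0) (x 1) * halfGraphon.toFun (x 1) (x 2) *
      halfGraphon.toFun (x 2) (x 3) * halfGraphon.toFun (x 3) (x 0)) = 1/16
    have : ∀ x : Fin 4 → unitI, halfGraphon.toFun (x 0) (x 1) * halfGraphon.toFun (x 1) (x 2) *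
        halfGraphon.toFun (x 2) (x 3) * halfGraphon.toFun (x 3) (x 0) = 1/16 := by
      intro x; show (1/2 : ℝ) * (1/2) * (1/2) * (1/2) = 1/16; norm_num
    simp_rw [this]
    simp
  · intro U hU
    have hd : 1/2 ≤ ∫ b, C4Aux.dU U b := by rw [← C4Aux.edge_eq U]; exact hU
    have h1 : (∫ b, C4Aux.dU U b) ^ 2 ≤ ∫ b, (C4Aux.dU U b) ^ 2 :=
      C4Aux.sq_int_le (C4Aux.dU_sm U).aestronglyMeasurable (C4Aux.dU_nonneg U) (C4Aux.dU_le_one U)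
    have h2 : (1/4 : ℝ) ≤ ∫ b, (C4Aux.dU U b) ^ 2 := by nlinarith
    have h3 : (1/4 : ℝ) ≤ ∫ p : unitI × unitI, C4Aux.GU U p := by
      rw [C4Aux.int_G_eq U]; exact h2
    have h4 : (∫ p : unitI × unitI, C4Aux.GU U p) ^ 2 ≤ ∫ p : unitI × unitI, (C4Aux.GU U p) ^ 2 :=
      C4Aux.sq_int_le (C4Aux.GU_m U).aestronglyMeasurable (C4Aux.GU_nonneg U) (C4Aux.GU_le_one U)
    rw [ge_iff_le, C4Aux.cyc_eq U]
    nlinarith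
end
end
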